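/- Let γ_{a,b} : ℍ × ℍ → ℍ × ℍ be defined for unit quaternions a, b by γ_{a,b}(x, y) = (a x ā, b y ā). Then γ_{a,b} is the identity map if and only if (a, b) = (1, 1) or (a, b) = (−1, −1). In other words, the kernel of the homomorphism γ : SU(2) × SU(2) → G₂ is the subgroup ℤ₂ = {(1,1), (−1,−1)}. -/

import Mathlib

noncomputable section

/-- The octonions, realized as pairs of quaternions. -/
abbrev Octonion := Quaternion ℝ × Quaternion ℝ

/-- Octonion multiplication: (α₁,α₂)·(β₁,β₂) = (α₁β₁ − β̄₂α₂, β₂α₁ + α₂β̄₁). -/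
def omul (a b : Octonion) : Octonion :=
  (a.1 * b.1 - star b.2 * a.2, b.2 * a.1 + a.2 * star b.1)

/-- Octonion conjugation: (α₁,α₂)* = (ᾱ₁, −α₂). -/
def oconj (a : Octonion) : Octonion := (star a.1, -a.2)

/-- The unit octonion 1 = (1,0). -/
def oone : Octonion := ((1 : Quaternion ℝ), (0 : Quaternion ℝ))

/-- An octonion is purely imaginary if a + a* = 0. -/
def IsPurelyImaginary (a : Octonion) : Prop := a + oconj a = 0

/-- The squared Euclidean norm ‖(α₁,α₂)‖² = ‖α₁‖² + ‖α₂‖². -/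
def onormSq (a : Octonion) : ℝ := ‖a.1‖ ^ 2 + ‖a.2‖ ^ 2

/-- The Euclidean norm of an octonion. -/
def onorm (a : Octonion) : ℝ := Real.sqrt (onormSq a)

/-- An octonion is unitary if its Euclidean norm equals 1. -/
def IsUnitary (a : Octonion) : Prop := onorm a = 1
/-- The map γ_{a,b}(x, y) = (a x ā, b y ā) on the octonions, for quaternions a, b. -/
def gamma (a b : Quaternion ℝ) (z : Octonion) : Octonion :=
  (a * z.1 * star a, b * z.2 * star a)

/-- The kernel of γ : SU(2) × SU(2) → G₂ is ℤ₂ = {(1,1), (−1,−1)}: for unit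
quaternions a, b, the map γ_{a,b} is the identity iff (a,b) = (1,1) or
(a,b) = (−1,−1). -/
theorem gamma_kernel (a b : Quaternion ℝ) (ha : ‖a‖ = 1) (hb : ‖b‖ = 1) :
    gamma a b = id ↔ (a = 1 ∧ b = 1) ∨ (a = -1 ∧ b = -1) := by
  have hsa : a * star a = 1 := by
    rw [Quaternion.self_mul_star]
    have : Quaternion.normSq a = 1 := by
      rw [Quaternion.normSq_eq_norm_mul_self, ha]; ring
    rw [this]; norm_num
  have has : star a * a = 1 := by
    rw [Quaternion.star_mul_self]
    have : Quaternion.normSq a = 1 := by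
      rw [Quaternion.normSq_eq_norm_mul_self, ha]; ring
    rw [this]; norm_num
  constructor
  · intro h
    have hx : ∀ x : Quaternion ℝ, a * x * star a = x := by
      intro x
      have := congrFun h (x, 0)
      simpa [gamma] using congrArg Prod.fst this
    have hcomm : ∀ x : Quaternion ℝ, a * x = x * a := by
      intro x
      calc a * x = a * x * (star a * a) := by rw [has, mul_one]
        _ = (a * x * star a) * a := (mul_assoc (a*x) _ _).symm
        _ = x * a := by rw [hx]
    have him : a.imI = 0 ∧ a.imJ = 0 ∧ a.imK = 0 := by
      have h1 := hcomm ((Quaternion.equivProd ℝ).symm (0,1,0,0))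
      have h2 := hcomm ((Quaternion.equivProd ℝ).symm (0,0,1,0))
      rw [Quaternion.ext_iff] at h1 h2
      simp [Quaternion.re_mul, Quaternion.imI_mul, Quaternion.imJ_mul,
        Quaternion.imK_mul] at h1 h2
      exact ⟨by linarith, by linarith, by linarith⟩
    have hareal : a = (a.re : Quaternion ℝ) := by
      ext <;> simp [him.1, him.2.1, him.2.2]
    have habs : |a.re| = 1 := by
      rw [hareal, Quaternion.norm_coe] at ha; exact ha
    have hbsa : b * star a = 1 := by
      have := congrFun h (0, 1)
      simpa [gamma] using congrArg Prod.snd this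
    have hba : b = a := by
      calc b = b * (star a * a) := by rw [has, mul_one]
        _ = (b * star a) * a := (mul_assoc b _ _).symm
        _ = a := by rw [hbsa, one_mul]
    rcases abs_eq (by norm_num : (0:ℝ) ≤ 1) |>.mp habs with h1 | h1
    · left
      have : a = 1 := by rw [hareal, h1]; norm_num
      exact ⟨this, by rw [hba, this]⟩
    · right
      have : a = -1 := by rw [hareal, h1]; norm_num
      exact ⟨this, by rw [hba, this]⟩
  · rintro (⟨rfl, rfl⟩ | ⟨rfl, rfl⟩) <;> funext z <;>
      simp [gamma, star_one]
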